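/- Let A be a Cayley matrix on a finite abelian group G of order n with connection function f, and let W = D A Dᵀ be the model matrix of SBM(A, μ, N) with uniform measure μ_i = 1/n (so each block has size N/n). Then for every character χ of G, the vector (1/√N) D χ is a unit eigenvector of W with eigenvalue (N/n) Σ_{x∈G} f(x) conj(χ(x)), and the set {(1/√N) D χ : χ ∈ Ĝ} is orthonormal. -/

import Mathlib

open scoped BigOperators ComplexConjugate
open Matrix

def blockD (N n : ℕ) (k : Fin n → ℕ) : Matrix (Fin N) (Fin n) ℂ :=
  Matrix.of fun r j =>
    if (∑ i : Fin n, if (i : ℕ) < (j : ℕ) then k i else 0) ≤ (r : ℕ) ∧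
        (r : ℕ) < (∑ i : Fin n, if (i : ℕ) < (j : ℕ) then k i else 0) + k j
    then 1 else 0

lemma blockD_const (n m N : ℕ) (hm : 0 < m) (r : Fin N) (j : Fin n) :
    blockD N n (fun _ => m) r j = if (r : ℕ) / m = (j : ℕ) then 1 else 0 := by
  have hsum : (∑ i : Fin n, if (i : ℕ) < (j : ℕ) then m else 0) = (j : ℕ) * m := by
    rw [Fin.sum_univ_eq_sum_range (fun i => if i < (j : ℕ) then m else 0), ← Finset.sum_filter]
    have hfil : (Finset.range n).filter (· < (j : ℕ)) = Finset.range (j : ℕ) := by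
      ext x; simp only [Finset.mem_filter, Finset.mem_range]
      have := j.2; omega
    rw [hfil, Finset.sum_const, Finset.card_range, smul_eq_mul]
  have key : (((j : ℕ) * m ≤ (r : ℕ) ∧ (r : ℕ) < (j : ℕ) * m + m)) ↔ (r : ℕ) / m = (j : ℕ) := by
    constructor
    · rintro ⟨h1, h2⟩
      exact Nat.div_eq_of_lt_le h1 (by rw [Nat.succ_mul]; exact h2)
    · intro h
      rw [← h]
      refine ⟨Nat.div_mul_le_self _ _, ?_⟩
      have h1 := Nat.mod_add_div (r : ℕ) m
      have h2 := Nat.mod_lt (r : ℕ) hm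
      rw [Nat.mul_comm]
      omega
  simp only [blockD, Matrix.of_apply, hsum, key]

def blockEquiv (n m N : ℕ) (hm : 0 < m) (hNm : N = n * m) : Fin n × Fin m ≃ Fin N where
  toFun := fun p => ⟨(p.1 : ℕ) * m + (p.2 : ℕ), by
    have h1 : (p.1 : ℕ) * m + (p.2 : ℕ) < ((p.1 : ℕ) + 1) * m := by
      rw [Nat.succ_mul]; exact Nat.add_lt_add_left p.2.2 _
    have h2 : ((p.1 : ℕ) + 1) * m ≤ n * m := Nat.mul_le_mul_right _ p.1.2
    omega⟩
  invFun := fun r => (⟨(r : ℕ) / m, by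
      rw [Nat.div_lt_iff_lt_mul hm]; exact hNm ▸ r.2⟩,
    ⟨(r : ℕ) % m, Nat.mod_lt _ hm⟩)
  left_inv := fun p => by
    ext
    · show ((p.1 : ℕ) * m + (p.2 : ℕ)) / m = (p.1 : ℕ)
      rw [Nat.mul_comm, Nat.mul_add_div hm, Nat.div_eq_of_lt p.2.2, Nat.add_zero]
    · show ((p.1 : ℕ) * m + (p.2 : ℕ)) % m = (p.2 : ℕ)
      rw [Nat.mul_comm, Nat.mul_add_mod, Nat.mod_eq_of_lt p.2.2]
  right_inv := fun r => by
    ext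
    show (r : ℕ) / m * m + (r : ℕ) % m = (r : ℕ)
    rw [Nat.mul_comm, Nat.div_add_mod]

lemma blockEquiv_val (n m N : ℕ) (hm : 0 < m) (hNm : N = n * m) (p : Fin n × Fin m) :
    ((blockEquiv n m N hm hNm p : Fin N) : ℕ) = (p.1 : ℕ) * m + (p.2 : ℕ) := rfl

/-- fiber sum over blocks of size `m` -/
lemma sum_div_fiber {M : Type*} [AddCommMonoid M] (n m N : ℕ) (hm : 0 < m) (hNm : N = n * m)
    (b : Fin N → Fin n) (hb : ∀ r, (b r : ℕ) = (r : ℕ) / m) (h : Fin n → M) :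
    ∑ r : Fin N, h (b r) = ∑ j : Fin n, m • h j := by
  set e := blockEquiv n m N hm hNm with he
  rw [← Equiv.sum_comp e (fun r => h (b r))]
  have hbe : ∀ p : Fin n × Fin m, b (e p) = p.1 := by
    intro p
    ext
    rw [hb, he, blockEquiv_val]
    rw [Nat.mul_comm, Nat.mul_add_div hm, Nat.div_eq_of_lt p.2.2, Nat.add_zero]
  simp only [hbe]
  rw [Fintype.sum_prod_type]
  simp [Finset.sum_const]

lemma char_sum_zero {G : Type*} [CommGroup G] [Fintype G] (χ ψ : G →* ℂ)
    (hχ : ∀ x, χ x ≠ 0) (hne : χ ≠ ψ) : ∑ x : G, (χ x)⁻¹ * ψ x = 0 := by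
  obtain ⟨y, hy⟩ := DFunLike.ne_iff.mp hne
  set S := ∑ x : G, (χ x)⁻¹ * ψ x with hS
  have hmul : (χ y)⁻¹ * ψ y * S = S := by
    rw [hS, Finset.mul_sum]
    refine Fintype.sum_equiv (Equiv.mulLeft y) _ _ fun x => ?_
    simp only [Equiv.coe_mulLeft, _root_.map_mul]
    rw [mul_inv]
    ring
  have h1 : ((χ y)⁻¹ * ψ y - 1) * S = 0 := by rw [sub_mul, one_mul, hmul, sub_self]
  rcases mul_eq_zero.mp h1 with h | h
  · exact absurd ((inv_mul_eq_one₀ (hχ y)).mp (sub_eq_zero.mp h)) hy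
  · exact h

/-- for a Cayley matrix `A` on a finite abelian group `G` of order `n`, and
`W = D A Dᵀ` the model matrix of the SBM with uniform block sizes `N/n`, every vector
`(1/√N) D χ` (for `χ` a character of `G`) is a unit eigenvector of `W` with eigenvalue
`(N/n) ∑_x f(x) conj(χ(x))`, and these vectors form an orthonormal set. -/
theorem cayley_uniform_SBM_eigenvectors
    (n N : ℕ) (hn : 0 < n) (hN : 0 < N) (hdvd : n ∣ N)
    (G : Type*) [CommGroup G] [Fintype G] [DecidableEq G]
    (g : Fin n ≃ G)
    (f : G → ℝ) (hf : ∀ x : G, f x = f x⁻¹)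
    (A : Matrix (Fin n) (Fin n) ℂ)
    (hA : ∀ i j, A i j = (f ((g i)⁻¹ * g j) : ℂ))
    (W : Matrix (Fin N) (Fin N) ℂ)
    (hW : W = blockD N n (fun _ => N / n) * A * (blockD N n (fun _ => N / n))ᵀ) :
    ∀ χ ψ : G →* ℂ, (∀ x : G, ‖χ x‖ = 1) → (∀ x : G, ‖ψ x‖ = 1) →
      (W.mulVec (((Real.sqrt N : ℂ))⁻¹ • (blockD N n (fun _ => N / n)).mulVec
            (fun i => χ (g i))) =
          (((N : ℂ) / n) * ∑ x : G, (f x : ℂ) * conj (χ x)) •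
            (((Real.sqrt N : ℂ))⁻¹ • (blockD N n (fun _ => N / n)).mulVec
              (fun i => χ (g i)))) ∧
      (star (((Real.sqrt N : ℂ))⁻¹ • (blockD N n (fun _ => N / n)).mulVec
            (fun i => χ (g i))) ⬝ᵥ
          (((Real.sqrt N : ℂ))⁻¹ • (blockD N n (fun _ => N / n)).mulVec
            (fun i => χ (g i))) = 1) ∧
      (χ ≠ ψ →
        star (((Real.sqrt N : ℂ))⁻¹ • (blockD N n (fun _ => N / n)).mulVec
            (fun i => χ (g i))) ⬝ᵥ
          (((Real.sqrt N : ℂ))⁻¹ • (blockD N n (fun _ => N / n)).mulVec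
            (fun i => ψ (g i))) = 0) := by
  intro χ ψ hχ hψ
  set m := N / n with hmdef
  have hNm : N = n * m := by rw [hmdef, Nat.mul_div_cancel' hdvd]
  have hm : 0 < m := Nat.div_pos (Nat.le_of_dvd hN hdvd) hn
  set D := blockD N n (fun _ => m) with hD
  set c : ℂ := ((Real.sqrt N : ℂ))⁻¹ with hc
  have hblt : ∀ r : Fin N, (r : ℕ) / m < n := fun r => by
    rw [Nat.div_lt_iff_lt_mul hm]; exact hNm ▸ r.2
  set b : Fin N → Fin n := fun r => ⟨(r : ℕ) / m, hblt r⟩ with hbdef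
  have hb : ∀ r, (b r : ℕ) = (r : ℕ) / m := fun r => rfl
  have hDapp : ∀ (r : Fin N) (j : Fin n), D r j = if b r = j then 1 else 0 := by
    intro r j
    rw [hD, blockD_const n m N hm r j]
    congr 1
    simp only [Fin.ext_iff, hb]
  have hDmul : ∀ u : Fin n → ℂ, D.mulVec u = fun r => u (b r) := by
    intro u; funext r
    simp only [Matrix.mulVec, dotProduct, hDapp, ite_mul, one_mul, zero_mul]
    simp
  have hχ0 : ∀ x : G, χ x ≠ 0 := fun x hx => by
    have := hχ x; rw [hx] at this; simp at this
  have hconjχ : ∀ x : G, conj (χ x) = (χ x)⁻¹ := fun x =>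
    (Complex.inv_eq_conj (hχ x)).symm
  have hcast : (N : ℂ) / (n : ℂ) = (m : ℂ) := by
    have hne : (n : ℂ) ≠ 0 := Nat.cast_ne_zero.mpr hn.ne'
    rw [div_eq_iff hne, hNm]; push_cast; ring
  -- the dot product formula
  have hdot : ∀ (χ' ψ' : G →* ℂ),
      star (D.mulVec (fun i => χ' (g i))) ⬝ᵥ (D.mulVec fun i => ψ' (g i))
        = (m : ℂ) * ∑ x : G, conj (χ' x) * ψ' x := by
    intro χ' ψ'
    rw [hDmul, hDmul]
    have step1 : star (fun r => χ' (g (b r))) ⬝ᵥ (fun r => ψ' (g (b r)))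
        = ∑ r : Fin N, conj (χ' (g (b r))) * ψ' (g (b r)) := by
      simp [dotProduct, Complex.star_def]
    rw [step1, sum_div_fiber n m N hm hNm b hb (fun j => conj (χ' (g j)) * ψ' (g j))]
    have step2 : ∑ j : Fin n, conj (χ' (g j)) * ψ' (g j) = ∑ x : G, conj (χ' x) * ψ' x :=
      Fintype.sum_equiv g _ _ (fun j => rfl)
    simp only [nsmul_eq_mul, ← Finset.mul_sum, step2]
  -- eigenvalue identity for A
  have hsum_inv : (∑ x : G, (f x : ℂ) * conj (χ x)) = ∑ y : G, (f y : ℂ) * χ y := by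
    refine Fintype.sum_equiv (Equiv.inv G) _ _ fun y => ?_
    simp only [Equiv.inv_apply, hconjχ, map_inv, ← hf]
  have hAeig : A.mulVec (fun i => χ (g i))
      = fun i => (∑ x : G, (f x : ℂ) * conj (χ x)) * χ (g i) := by
    funext i
    simp only [Matrix.mulVec, dotProduct, hA, hsum_inv]
    calc ∑ j : Fin n, ((f ((g i)⁻¹ * g j) : ℝ) : ℂ) * χ (g j)
        = ∑ x : G, ((f ((g i)⁻¹ * x) : ℝ) : ℂ) * χ x :=
          Fintype.sum_equiv g _ _ (fun j => rfl)
      _ = ∑ y : G, ((f y : ℝ) : ℂ) * χ ((g i) * y) := by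
          refine (Fintype.sum_equiv (Equiv.mulLeft (g i)) _ _ fun y => ?_).symm
          simp [Equiv.coe_mulLeft, inv_mul_cancel_left]
      _ = (∑ y : G, ((f y : ℝ) : ℂ) * χ y) * χ (g i) := by
          simp only [_root_.map_mul, Finset.sum_mul]
          refine Finset.sum_congr rfl fun y _ => by ring
  have hDTD : ∀ u : Fin n → ℂ, Dᵀ.mulVec (D.mulVec u) = (m : ℂ) • u := by
    intro u; funext j
    rw [hDmul]
    simp only [Matrix.mulVec, dotProduct, Matrix.transpose_apply, hDapp]
    rw [sum_div_fiber n m N hm hNm b hb (fun j' => (if j' = j then (1 : ℂ) else 0) * u j')]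
    simp [nsmul_eq_mul, mul_ite, ite_mul, Finset.sum_ite_eq, Finset.sum_ite_eq']
  refine ⟨?_, ?_, ?_⟩
  · -- eigenvector equation
    rw [hW, Matrix.mulVec_smul, ← Matrix.mulVec_mulVec, ← Matrix.mulVec_mulVec, hDTD,
      Matrix.mulVec_smul, hAeig]
    have hv : (fun i => (∑ x : G, (f x : ℂ) * conj (χ x)) * χ (g i))
        = (∑ x : G, (f x : ℂ) * conj (χ x)) • (fun i => χ (g i)) := by
      funext i; simp
    rw [hv, Matrix.mulVec_smul, smul_smul, smul_smul, Matrix.mulVec_smul, smul_smul]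
    congr 1
    rw [hcast]; ring
  · -- unit norm
    rw [star_smul, smul_dotProduct, dotProduct_smul, hdot χ χ]
    have hone : ∀ x : G, conj (χ x) * χ x = 1 := fun x => by
      rw [hconjχ, inv_mul_cancel₀ (hχ0 x)]
    simp only [hone, Finset.sum_const, Finset.card_univ, nsmul_eq_mul, mul_one]
    have hcard : (Fintype.card G : ℂ) = (n : ℂ) := by
      have : Fintype.card G = n := by
        rw [← Fintype.card_fin n]; exact (Fintype.card_congr g).symm
      rw [this]
    have hstarc : star c = c := by
      rw [hc]; rw [Complex.star_def, map_inv₀, Complex.conj_ofReal]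
    have hcc : c * c = (N : ℂ)⁻¹ := by
      rw [hc, ← mul_inv, ← Complex.ofReal_mul, Real.mul_self_sqrt (Nat.cast_nonneg N)]
      norm_num
    rw [hstarc, hcard, smul_eq_mul, smul_eq_mul, ← mul_assoc, hcc]
    have hmn : (m : ℂ) * (n : ℂ) = (N : ℂ) := by rw [hNm]; push_cast; ring
    rw [hmn]
    exact inv_mul_cancel₀ (Nat.cast_ne_zero.mpr hN.ne')
  · -- orthogonality
    intro hne
    rw [star_smul, smul_dotProduct, dotProduct_smul, hdot χ ψ]
    have hzero : ∑ x : G, conj (χ x) * ψ x = 0 := by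
      have h := char_sum_zero χ ψ hχ0 hne
      simpa only [hconjχ] using h
    rw [hzero]
    simp
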